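/- Let 0 ≤ ε < 1/2, A > 0, and μ be real numbers, and define D := 1 + (√3 − 1)ε + (2 − √3)ε², e₁ := A(1 + ε(√3 − 1)/2)/D, and e₂ := A·ε(1 − √3)/2/D. Then for every real sequence (λ_k) satisfying λ_{k+2} + ε λ_{k+1} − ε λ_k = μ + A·sin((k+2−5)π/6) for all k ∈ ℕ, the difference λ_k − L_k converges to 0 as k → ∞, where L_k := μ + √(e₁² + e₂²)·sin((k−5)π/6 + π/3 + arctan((e₂ − √3·e₁)/(√3·e₂ + e₁))). -/

import Mathlib

private lemma stmt8_sqrt_aux {u t : ℝ} (ht : 0 < t) :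
    Real.sqrt (1 + (u / t) ^ 2) = Real.sqrt (t ^ 2 + u ^ 2) / t := by
  rw [eq_div_iff ht.ne']
  rw [← Real.sqrt_sq ht.le, ← Real.sqrt_mul (by positivity)]
  congr 1
  field_simp
  rw [Real.sq_sqrt (by positivity)]

private lemma stmt8_cos_arctan_div {u t : ℝ} (ht : 0 < t) :
    Real.cos (Real.arctan (u / t)) = t / Real.sqrt (t ^ 2 + u ^ 2) := by
  rw [Real.cos_arctan, stmt8_sqrt_aux ht, one_div, inv_div]

private lemma stmt8_sin_arctan_div {u t : ℝ} (ht : 0 < t) :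
    Real.sin (Real.arctan (u / t)) = u / Real.sqrt (t ^ 2 + u ^ 2) := by
  rw [Real.sin_arctan, stmt8_sqrt_aux ht]; field_simp

private lemma stmt8_conv_aux (ε : ℝ) (hε0 : 0 ≤ ε) (hε1 : ε < 1/2) (d : ℕ → ℝ)
    (hd : ∀ k, d (k+2) = ε * d k - ε * d (k+1)) :
    Filter.Tendsto d Filter.atTop (nhds 0) := by
  set M : ℕ → ℝ := fun k => max |d k| |d (k+1)| with hM
  have hM0 : ∀ k, 0 ≤ M k := fun k => le_trans (abs_nonneg _) (le_max_left _ _)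
  have hstep : ∀ k, |d (k+2)| ≤ 2*ε * M k := by
    intro k
    rw [hd k]
    calc |ε * d k - ε * d (k+1)| ≤ |ε * d k| + |ε * d (k+1)| := abs_sub _ _
    _ = ε * |d k| + ε * |d (k+1)| := by rw [abs_mul, abs_mul, abs_of_nonneg hε0]
    _ ≤ ε * M k + ε * M k := by
        have h1 : |d k| ≤ M k := le_max_left _ _
        have h2 : |d (k+1)| ≤ M k := le_max_right _ _
        have := mul_le_mul_of_nonneg_left h1 hε0
        have := mul_le_mul_of_nonneg_left h2 hε0
        linarith
    _ = 2*ε * M k := by ring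
  have hmono : ∀ k, M (k+1) ≤ M k := by
    intro k
    apply max_le (le_max_right _ _)
    exact (hstep k).trans (by nlinarith [hM0 k])
  have hanti : Antitone M := antitone_nat_of_succ_le hmono
  have htwo : ∀ k, M (k+2) ≤ 2*ε * M k := by
    intro k
    apply max_le (hstep k)
    have h3 : |d (k+3)| ≤ 2*ε * M (k+1) := hstep (k+1)
    have h4 : M (k+1) ≤ M k := hmono k
    calc |d (k+3)| ≤ 2*ε * M (k+1) := h3
    _ ≤ 2*ε * M k := by nlinarith
  have hgeo : ∀ n, M (2*n) ≤ (2*ε)^n * M 0 := by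
    intro n
    induction n with
    | zero => simp
    | succ n ih =>
      have h1 : M (2*(n+1)) ≤ 2*ε * M (2*n) := by
        have := htwo (2*n); convert this using 2; ring
      calc M (2*(n+1)) ≤ 2*ε * M (2*n) := h1
      _ ≤ 2*ε * ((2*ε)^n * M 0) := mul_le_mul_of_nonneg_left ih (by linarith)
      _ = (2*ε)^(n+1) * M 0 := by ring
  have hq0 : (0:ℝ) ≤ 2*ε := by linarith
  have hq1 : 2*ε < 1 := by linarith
  have hbound : ∀ k, |d k| ≤ (2*ε)^(k/2) * M 0 := by
    intro k
    have h1 : |d k| ≤ M k := le_max_left _ _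
    have h2 : M k ≤ M (2*(k/2)) := hanti (by omega)
    exact h1.trans (h2.trans (hgeo (k/2)))
  have hdiv : Filter.Tendsto (fun k : ℕ => k / 2) Filter.atTop Filter.atTop :=
    Filter.tendsto_atTop_atTop.mpr fun b => ⟨2*b, fun a ha => by omega⟩
  have htend : Filter.Tendsto (fun k : ℕ => (2*ε)^(k/2) * M 0) Filter.atTop (nhds 0) := by
    have h := ((tendsto_pow_atTop_nhds_zero_of_lt_one hq0 hq1).comp hdiv).mul_const (M 0)
    simpa using h
  exact squeeze_zero_norm (fun k => by simpa [Real.norm_eq_abs] using hbound k) htend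

set_option maxHeartbeats 1000000 in
/-- For 0 ≤ ε < 1/2, every solution of the price recurrence with sinusoidal demand
converges to the limiting sinusoid L_k. -/
theorem stmt_8 (ε A μ : ℝ) (hε0 : 0 ≤ ε) (hε1 : ε < 1 / 2) (hA : 0 < A)
    (D e₁ e₂ : ℝ)
    (hD : D = 1 + (Real.sqrt 3 - 1) * ε + (2 - Real.sqrt 3) * ε ^ 2)
    (he₁ : e₁ = A * (1 + ε * (Real.sqrt 3 - 1) / 2) / D)
    (he₂ : e₂ = A * ε * (1 - Real.sqrt 3) / 2 / D)
    (lam : ℕ → ℝ)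
    (hrec : ∀ k : ℕ, lam (k + 2) + ε * lam (k + 1) - ε * lam k
        = μ + A * Real.sin (((k : ℝ) + 2 - 5) * Real.pi / 6))
    (L : ℕ → ℝ)
    (hL : ∀ k : ℕ, L k = μ + Real.sqrt (e₁ ^ 2 + e₂ ^ 2) *
        Real.sin (((k : ℝ) - 5) * Real.pi / 6 + Real.pi / 3 +
          Real.arctan ((e₂ - Real.sqrt 3 * e₁) / (Real.sqrt 3 * e₂ + e₁)))) :
    Filter.Tendsto (fun k => lam k - L k) Filter.atTop (nhds 0) := by
  set r := Real.sqrt 3 with hrdef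
  have hr : r ^ 2 = 3 := Real.sq_sqrt (by norm_num)
  have hr0 : 0 ≤ r := Real.sqrt_nonneg 3
  have hr1 : 1 < r := by nlinarith
  have hr2 : r < 2 := by nlinarith
  have hεr : 0 ≤ ε * (r - 1) := mul_nonneg hε0 (by linarith)
  have hDpos : 0 < D := by rw [hD]; nlinarith
  have hD0 := hDpos.ne'
  have he₁pos : 0 < e₁ := by
    rw [he₁]; apply div_pos _ hDpos
    apply mul_pos hA; linarith
  have ht : 0 < r * e₂ + e₁ := by
    have h1 : r * e₂ + e₁ = A * (1 + ε * (r - 2)) / D := by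
      rw [he₁, he₂]; field_simp; ring_nf
      linear_combination (-ε) * hr
    have h2 : ε * (2 - r) ≤ ε := by nlinarith
    rw [h1]; apply div_pos (mul_pos hA (by linarith)) hDpos
  set S := Real.sqrt (e₁ ^ 2 + e₂ ^ 2) with hSdef
  have hSpos : 0 < S := Real.sqrt_pos.mpr (by positivity)
  have hsum : Real.sqrt ((r * e₂ + e₁) ^ 2 + (e₂ - r * e₁) ^ 2) = 2 * S := by
    rw [show (r * e₂ + e₁) ^ 2 + (e₂ - r * e₁) ^ 2 = 2 ^ 2 * (e₁ ^ 2 + e₂ ^ 2) by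
      linear_combination (e₁ ^ 2 + e₂ ^ 2) * hr]
    rw [Real.sqrt_mul (by positivity), Real.sqrt_sq (by norm_num)]
  have hcos : Real.cos (Real.arctan ((e₂ - r * e₁) / (r * e₂ + e₁)))
      = (r * e₂ + e₁) / (2 * S) := by rw [stmt8_cos_arctan_div ht, hsum]
  have hsin : Real.sin (Real.arctan ((e₂ - r * e₁) / (r * e₂ + e₁)))
      = (e₂ - r * e₁) / (2 * S) := by rw [stmt8_sin_arctan_div ht, hsum]
  have hLalt : ∀ k : ℕ, L k = μ + e₁ * Real.sin (((k : ℝ) - 5) * Real.pi / 6)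
      + e₂ * Real.cos (((k : ℝ) - 5) * Real.pi / 6) := by
    intro k
    rw [hL k, Real.sin_add, hcos, hsin, Real.sin_add, Real.cos_add,
      Real.sin_pi_div_three, Real.cos_pi_div_three]
    field_simp
    ring_nf
    rw [← hrdef]
    linear_combination (norm := ring_nf)
      (Real.sin ((k:ℝ) * Real.pi * (1/6) + Real.pi * (-5/6)) * e₁
        + Real.cos ((k:ℝ) * Real.pi * (1/6) + Real.pi * (-5/6)) * e₂) * hr
  have hc6 : Real.cos (Real.pi / 6) = r / 2 := Real.cos_pi_div_six
  have hs3 : Real.sin (Real.pi / 3) = r / 2 := Real.sin_pi_div_three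
  have hDne : (1 + (r - 1) * ε + (2 - r) * ε ^ 2) ≠ 0 := hD ▸ hD0
  have ce1 : e₁ / 2 - e₂ * r / 2 + ε * (e₁ * r / 2 - e₂ / 2) - ε * e₁ = A / 2 := by
    rw [he₁, he₂]; field_simp; rw [hD]; ring_nf
    linear_combination (norm := ring_nf) (ε + ε^2) * hr
  have ce2 : e₁ * r / 2 + e₂ / 2 + ε * (e₁ / 2 + e₂ * r / 2) - ε * e₂ = A * r / 2 := by
    rw [he₁, he₂]; field_simp; rw [hD]; ring_nf
    linear_combination (norm := ring_nf)
      (ε^2 - ε) * hr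
  have hLrec : ∀ k : ℕ, L (k + 2) + ε * L (k + 1) - ε * L k
      = μ + A * Real.sin (((k : ℝ) + 2 - 5) * Real.pi / 6) := by
    intro k
    have a1 : (((k + 1 : ℕ) : ℝ) - 5) * Real.pi / 6
        = ((k : ℝ) - 5) * Real.pi / 6 + Real.pi / 6 := by push_cast; ring
    have a2 : (((k + 2 : ℕ) : ℝ) - 5) * Real.pi / 6
        = ((k : ℝ) - 5) * Real.pi / 6 + Real.pi / 3 := by push_cast; ring
    have a3 : ((k : ℝ) + 2 - 5) * Real.pi / 6
        = ((k : ℝ) - 5) * Real.pi / 6 + Real.pi / 3 := by ring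
    rw [hLalt, hLalt, hLalt, a1, a2, a3, Real.sin_add, Real.sin_add, Real.cos_add,
      Real.cos_add, Real.sin_pi_div_six, hc6, hs3, Real.cos_pi_div_three]
    linear_combination Real.sin (((k : ℝ) - 5) * Real.pi / 6) * ce1
      + Real.cos (((k : ℝ) - 5) * Real.pi / 6) * ce2
  apply stmt8_conv_aux ε hε0 hε1
  intro k
  have h1 := hrec k
  have h2 := hLrec k
  linarith
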